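/- In the gap instance with parameters c > 1, n ≥ 1 and B > 0, the integer solution b^odd that bids b_i = 1 for all odd i and b_i = 0 for all even i satisfies E[value(b^odd)] = n·α·B, and it is optimal: every solution b with 0 ≤ b_i ≤ 1 satisfies E[value(b)] ≤ n·α·B. -/

import Mathlib

open Finset

/-- Value obtained in scenario `σ` of the gap instance: there are `2n` keywords with
`cpc i = c^i`; in scenario `σ ∈ {1,…,n}` keywords `2σ−1` and `2σ` each receive
`B / c^(2σ−1)` clicks and all other keywords receive none. -/
noncomputable def gapVal (c B : ℝ) (n : ℕ) (b : ℕ → ℝ) (σ : ℕ) : ℝ :=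
  (∑ i ∈ Finset.Icc 1 (2 * n),
      b i * (if i = 2 * σ - 1 ∨ i = 2 * σ then B / c ^ (2 * σ - 1) else 0)) /
    max 1 ((∑ i ∈ Finset.Icc 1 (2 * n),
      b i * c ^ i * (if i = 2 * σ - 1 ∨ i = 2 * σ then B / c ^ (2 * σ - 1) else 0)) / B)

/-- Expected value in the gap instance: scenario `σ` has probability `α · c^(2σ−1)`,
where `α = 1 / ∑_{τ=1}^n c^(2τ−1)`. -/
noncomputable def gapEv (c B : ℝ) (n : ℕ) (b : ℕ → ℝ) : ℝ :=
  ∑ σ ∈ Finset.Icc 1 n,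
    ((∑ τ ∈ Finset.Icc 1 n, c ^ (2 * τ - 1))⁻¹ * c ^ (2 * σ - 1)) * gapVal c B n b σ

lemma sum_ind (f : ℕ → ℝ) (t : ℝ) (n σ : ℕ) (h1 : 1 ≤ σ) (h2 : σ ≤ n) :
    ∑ i ∈ Finset.Icc 1 (2 * n), f i * (if i = 2 * σ - 1 ∨ i = 2 * σ then t else 0)
      = f (2 * σ - 1) * t + f (2 * σ) * t := by
  have hne : 2 * σ - 1 ≠ 2 * σ := by omega
  have hsum : ∀ i ∈ Finset.Icc 1 (2 * n),
      f i * (if i = 2 * σ - 1 ∨ i = 2 * σ then t else 0)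
      = (if i = 2 * σ - 1 then f i * t else 0) + (if i = 2 * σ then f i * t else 0) := by
    intro i _
    by_cases ha : i = 2 * σ - 1
    · subst ha; simp [hne]
    · by_cases hb : i = 2 * σ
      · subst hb; simp [Ne.symm hne, hne]
      · simp [ha, hb]
  rw [Finset.sum_congr rfl hsum, Finset.sum_add_distrib,
      Finset.sum_ite_eq', Finset.sum_ite_eq']
  have m1 : 2 * σ - 1 ∈ Finset.Icc 1 (2 * n) := by
    simp only [Finset.mem_Icc]; omega
  have m2 : 2 * σ ∈ Finset.Icc 1 (2 * n) := by
    simp only [Finset.mem_Icc]; omega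
  rw [if_pos m1, if_pos m2]

lemma gapVal_eq (c B : ℝ) (hc : 1 < c) (hB : 0 < B) (n : ℕ) (b : ℕ → ℝ) (σ : ℕ)
    (h1 : 1 ≤ σ) (h2 : σ ≤ n) :
    gapVal c B n b σ =
      ((b (2 * σ - 1) + b (2 * σ)) * (B / c ^ (2 * σ - 1))) /
        max 1 (b (2 * σ - 1) + c * b (2 * σ)) := by
  have hc0 : (0 : ℝ) < c := lt_trans one_pos hc
  have hck : (0 : ℝ) < c ^ (2 * σ - 1) := pow_pos hc0 _
  have e1 := sum_ind b (B / c ^ (2 * σ - 1)) n σ h1 h2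
  have e2 := sum_ind (fun i => b i * c ^ i) (B / c ^ (2 * σ - 1)) n σ h1 h2
  unfold gapVal
  rw [e1, e2]
  congr 1
  · ring
  congr 1
  have h2σ : 2 * σ = (2 * σ - 1) + 1 := by omega
  have hpow : c ^ (2 * σ) = c ^ (2 * σ - 1) * c := by rw [← pow_succ, ← h2σ]
  rw [hpow]
  field_simp

lemma gapVal_le (c B : ℝ) (hc : 1 < c) (hB : 0 < B) (n : ℕ) (b : ℕ → ℝ)
    (hb : ∀ i, 0 ≤ b i ∧ b i ≤ 1) (σ : ℕ) (h1 : 1 ≤ σ) (h2 : σ ≤ n) :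
    gapVal c B n b σ ≤ B / c ^ (2 * σ - 1) := by
  have hc0 : (0 : ℝ) < c := lt_trans one_pos hc
  have ht : (0 : ℝ) < B / c ^ (2 * σ - 1) := div_pos hB (pow_pos hc0 _)
  rw [gapVal_eq c B hc hB n b σ h1 h2]
  set x := b (2 * σ - 1) with hx
  set y := b (2 * σ) with hy
  have hx0 := (hb (2 * σ - 1)).1
  have hy0 := (hb (2 * σ)).1
  have hM : (0 : ℝ) < max 1 (x + c * y) := lt_of_lt_of_le one_pos (le_max_left _ _)
  rw [div_le_iff₀ hM]
  have hxy : x + y ≤ max 1 (x + c * y) := by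
    have h' : x + y ≤ x + c * y := by nlinarith
    exact le_trans h' (le_max_right _ _)
  nlinarith

lemma ev_const (c B : ℝ) (hc : 1 < c) (hB : 0 < B) (n : ℕ)
    (hS : (∑ τ ∈ Finset.Icc 1 n, c ^ (2 * τ - 1)) ≠ 0) :
    ∑ σ ∈ Finset.Icc 1 n,
      ((∑ τ ∈ Finset.Icc 1 n, c ^ (2 * τ - 1))⁻¹ * c ^ (2 * σ - 1)) * (B / c ^ (2 * σ - 1))
      = n * (∑ τ ∈ Finset.Icc 1 n, c ^ (2 * τ - 1))⁻¹ * B := by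
  have hc0 : (0 : ℝ) < c := lt_trans one_pos hc
  have : ∀ σ ∈ Finset.Icc 1 n,
      ((∑ τ ∈ Finset.Icc 1 n, c ^ (2 * τ - 1))⁻¹ * c ^ (2 * σ - 1)) * (B / c ^ (2 * σ - 1))
      = (∑ τ ∈ Finset.Icc 1 n, c ^ (2 * τ - 1))⁻¹ * B := by
    intro σ _
    have hck : c ^ (2 * σ - 1) ≠ 0 := ne_of_gt (pow_pos hc0 _)
    field_simp
  rw [Finset.sum_congr rfl this, Finset.sum_const, Nat.card_Icc]
  simp only [Nat.add_sub_cancel, nsmul_eq_mul]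
  ring

/-- **Gap instance: bidding on the odd keywords is optimal**, with expected value `n·α·B`. -/
theorem stmt_10 (c : ℝ) (hc : 1 < c) (n : ℕ) (hn : 1 ≤ n) (B : ℝ) (hB : 0 < B) :
    gapEv c B n (fun i => if Odd i then 1 else 0) =
      n * (∑ τ ∈ Finset.Icc 1 n, c ^ (2 * τ - 1))⁻¹ * B ∧
    ∀ b : ℕ → ℝ, (∀ i, 0 ≤ b i ∧ b i ≤ 1) →
      gapEv c B n b ≤ n * (∑ τ ∈ Finset.Icc 1 n, c ^ (2 * τ - 1))⁻¹ * B := by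
  have hc0 : (0 : ℝ) < c := lt_trans one_pos hc
  have hS : (0 : ℝ) < ∑ τ ∈ Finset.Icc 1 n, c ^ (2 * τ - 1) := by
    apply Finset.sum_pos
    · intro τ _; exact pow_pos hc0 _
    · exact ⟨1, by simp [Finset.mem_Icc]; omega⟩
  have hα : (0 : ℝ) < (∑ τ ∈ Finset.Icc 1 n, c ^ (2 * τ - 1))⁻¹ := inv_pos.mpr hS
  constructor
  · rw [← ev_const c B hc hB n (ne_of_gt hS)]
    unfold gapEv
    apply Finset.sum_congr rfl
    intro σ hσ
    rw [Finset.mem_Icc] at hσ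
    congr 1
    rw [gapVal_eq c B hc hB n _ σ hσ.1 hσ.2]
    have hodd : Odd (2 * σ - 1) := by
      rw [Nat.odd_iff]; omega
    have heven : ¬ Odd (2 * σ) := by
      rw [Nat.odd_iff]; omega
    simp [hodd, heven]
  · intro b hb
    rw [← ev_const c B hc hB n (ne_of_gt hS)]
    unfold gapEv
    apply Finset.sum_le_sum
    intro σ hσ
    rw [Finset.mem_Icc] at hσ
    have hw : (0 : ℝ) ≤ (∑ τ ∈ Finset.Icc 1 n, c ^ (2 * τ - 1))⁻¹ * c ^ (2 * σ - 1) :=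
      le_of_lt (mul_pos hα (pow_pos hc0 _))
    exact mul_le_mul_of_nonneg_left (gapVal_le c B hc hB n b hb σ hσ.1 hσ.2) hw
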